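/- arXiv:2004.13774 — 5 statements merged into one kernel-verified Lean document; each statement's English description precedes it below -/
import Mathlib

section
/- Let q be a prime power, l ≥ 1 an integer, r_1, …, r_l ≥ 1 integers, and α_1, …, α_l pairwise distinct elements of 𝔽_q^*. Then the number of tuples (x^{(i)}_j)_{1 ≤ i ≤ l, 1 ≤ j ≤ r_i} with all entries in 𝔽_q^*, satisfying ∑_{i=1}^l ∑_{j=1}^{r_i} x^{(i)}_j = 0 and ∑_{i=1}^l α_i (∑_{j=1}^{r_i} x^{(i)}_j) = 0, equals A_{r_1,…,r_l}. In particular, this number does not depend on the choice of the pairwise distinct nonzero elements α_1, …, α_l. -/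
/-- `ψ_s = ((q-1)^s + (-1)^s (q-1))/q` (an exact integer division). -/
def psi (q s : ℕ) : ℤ := (((q : ℤ) - 1) ^ s + (-1) ^ s * ((q : ℤ) - 1)) / (q : ℤ)

/-- `φ_s = ((q-1)^s - ψ_s)/(q-1)` (an exact integer division). -/
def phi (q s : ℕ) : ℤ := (((q : ℤ) - 1) ^ s - psi q s) / ((q : ℤ) - 1)

/-- Auxiliary recursion for `A_{r_1,…,r_l}`, taking the list in reversed order
`[r_l, r_{l-1}, …, r_1]`. -/
def Arev (q : ℕ) : List ℕ → ℤ
  | [] => 0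
  | [r] => psi q r
  | r :: rs => psi q rs.sum * phi q r + (-1) ^ r * Arev q rs

/-- `A_{r_1,…,r_l}` for the list `[r_1, …, r_l]`:
`A_{r_1} = ψ_{r_1}` and `A_{r_1,…,r_m} = ψ_{r_1+⋯+r_{m-1}} φ_{r_m} + (-1)^{r_m} A_{r_1,…,r_{m-1}}`. -/
def Atup (q : ℕ) (l : List ℕ) : ℤ := Arev q l.reverse

open Finset
open scoped Classical

lemma dvd_num1 (q s : ℕ) : (q:ℤ) ∣ ((q:ℤ)-1)^s + (-1)^s * ((q:ℤ)-1) := by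
  have h : ((q:ℤ)-1) ≡ (-1) [ZMOD (q:ℤ)] := Int.ModEq.symm (Int.modEq_iff_dvd.mpr ⟨1, by ring⟩)
  have := (h.pow s).add ((Int.ModEq.refl ((-1:ℤ)^s)).mul h)
  simpa using (Int.modEq_iff_dvd.mp this.symm)

lemma dvd_num2 (q s : ℕ) : (q:ℤ) ∣ ((q:ℤ)-1)^s - (-1)^s := by
  have h : ((q:ℤ)-1) ≡ (-1) [ZMOD (q:ℤ)] := Int.ModEq.symm (Int.modEq_iff_dvd.mpr ⟨1, by ring⟩)
  simpa using (Int.modEq_iff_dvd.mp (h.pow s).symm)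

section
variable {q : ℕ} (hq : 2 ≤ q)
include hq

lemma q_ne : (q:ℤ) ≠ 0 := by
  have : (2:ℤ) ≤ (q:ℤ) := by exact_mod_cast hq
  omega

lemma q1_ne : (q:ℤ) - 1 ≠ 0 := by
  have : (2:ℤ) ≤ (q:ℤ) := by exact_mod_cast hq
  omega

lemma psi_mul (s : ℕ) : (q:ℤ) * psi q s = ((q:ℤ)-1)^s + (-1)^s * ((q:ℤ)-1) :=
  Int.mul_ediv_cancel' (dvd_num1 q s)

lemma phi_eq (s : ℕ) : phi q s = (((q:ℤ)-1)^s - (-1)^s) / (q:ℤ) := by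
  have key : ((q:ℤ)-1)^s - psi q s = ((q:ℤ)-1) * ((((q:ℤ)-1)^s - (-1)^s) / (q:ℤ)) := by
    apply mul_left_cancel₀ (q_ne hq)
    rw [mul_sub, psi_mul hq, mul_comm ((q:ℤ)) (((q:ℤ)-1) * _), mul_assoc,
      Int.ediv_mul_cancel (dvd_num2 q s)]
    ring
  rw [phi, key, Int.mul_ediv_cancel_left _ (q1_ne hq)]

lemma phi_mul (s : ℕ) : (q:ℤ) * phi q s = ((q:ℤ)-1)^s - (-1)^s := by
  rw [phi_eq hq, Int.mul_ediv_cancel' (dvd_num2 q s)]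

lemma psi_zero : psi q 0 = 1 := by
  apply mul_left_cancel₀ (q_ne hq); rw [psi_mul hq]; ring

lemma phi_zero : phi q 0 = 0 := by
  apply mul_left_cancel₀ (q_ne hq); rw [phi_mul hq]; ring

lemma psi_succ (s : ℕ) : psi q (s+1) = ((q:ℤ)-1) * phi q s := by
  apply mul_left_cancel₀ (q_ne hq)
  rw [psi_mul hq, mul_left_comm, phi_mul hq]; ring

lemma phi_succ (s : ℕ) : phi q (s+1) = psi q s + ((q:ℤ)-2) * phi q s := by
  apply mul_left_cancel₀ (q_ne hq)
  rw [phi_mul hq, mul_add, psi_mul hq, mul_left_comm, phi_mul hq]; ring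

lemma psi_eq_phi (s : ℕ) : psi q s = phi q s + (-1)^s := by
  apply mul_left_cancel₀ (q_ne hq)
  rw [psi_mul hq, mul_add, phi_mul hq]; ring

end

lemma natCard_sigma {ι : Type*} [Fintype ι] (f : ι → Type*) [∀ i, Finite (f i)] :
    Nat.card (Σ i, f i) = ∑ i, Nat.card (f i) := by
  haveI : ∀ i, Fintype (f i) := fun i => Fintype.ofFinite _
  simp [Nat.card_eq_fintype_card, Fintype.card_sigma]

lemma natCard_int_sigma {ι : Type*} [Fintype ι] (f : ι → Type*) [∀ i, Finite (f i)] :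
    (Nat.card (Σ i, f i) : ℤ) = ∑ i, (Nat.card (f i) : ℤ) := by
  rw [natCard_sigma]; push_cast; rfl

lemma countFin {F : Type*} [Field F] [Fintype F] (q : ℕ) (hF : Fintype.card F = q)
    (n : ℕ) : ∀ (s : F),
    (Nat.card {x : Fin n → F // (∀ i, x i ≠ 0) ∧ ∑ i, x i = s} : ℤ)
      = if s = 0 then psi q n else phi q n := by
  have hq : 2 ≤ q := hF ▸ Fintype.one_lt_card
  induction n with
  | zero =>
    intro s
    rcases eq_or_ne s 0 with rfl | hs
    · rw [if_pos rfl, psi_zero hq]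
      norm_cast
      rw [Nat.card_eq_one_iff_unique]
      exact ⟨⟨fun ⟨x, hx⟩ ⟨y, hy⟩ => by ext i; exact i.elim0⟩,
        ⟨⟨finZeroElim, fun i => i.elim0, by simp⟩⟩⟩
    · rw [if_neg hs, phi_zero hq]
      norm_cast
      rw [Nat.card_eq_zero]
      exact Or.inl ⟨fun ⟨x, hx1, hx2⟩ => hs (by simpa using hx2.symm)⟩
  | succ n ih =>
    intro s
    set C : (Fin (n+1) → F) → Prop :=
      fun x => (∀ i, x i ≠ 0) ∧ ∑ i, x i = s with hC
    have e1 : {z : F × (Fin n → F) // C (Fin.snocEquiv (fun _ => F) z)} ≃ {x // C x} :=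
      Equiv.subtypeEquiv (Fin.snocEquiv (fun _ => F)) (fun z => Iff.rfl)
    have e2 : {z : F × (Fin n → F) // C (Fin.snocEquiv (fun _ => F) z)}
        ≃ Σ y : F, {x : Fin n → F // C (Fin.snocEquiv (fun _ => F) (y, x))} :=
      Equiv.subtypeProdEquivSigmaSubtype
        (fun y x => C (Fin.snocEquiv (fun _ => F) (y, x)))
    rw [Nat.card_congr (e1.symm.trans e2), natCard_int_sigma]
    have hfib : ∀ y : F,
        (Nat.card {x : Fin n → F // C (Fin.snocEquiv (fun _ => F) (y, x))} : ℤ)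
          = if y = 0 then 0 else if y = s then psi q n else phi q n := by
      intro y
      rcases eq_or_ne y 0 with rfl | hy
      · rw [if_pos rfl]
        norm_cast
        rw [Nat.card_eq_zero]
        refine Or.inl ⟨fun ⟨x, hx1, hx2⟩ => ?_⟩
        exact (hx1 (Fin.last n)) (by simp [Fin.snocEquiv])
      · rw [if_neg hy]
        have e3 : {x : Fin n → F // C (Fin.snocEquiv (fun _ => F) (y, x))}
            ≃ {x : Fin n → F // (∀ i, x i ≠ 0) ∧ ∑ i, x i = s - y} := by
          apply Equiv.subtypeEquivRight
          intro x
          simp only [hC, Fin.snocEquiv, Equiv.coe_fn_mk]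
          constructor
          · rintro ⟨h1, h2⟩
            refine ⟨fun i => by simpa using h1 i.castSucc, ?_⟩
            rw [Fin.sum_univ_castSucc] at h2
            simp only [Fin.snoc_castSucc, Fin.snoc_last] at h2
            exact eq_sub_of_add_eq h2
          · rintro ⟨h1, h2⟩
            refine ⟨fun i => ?_, ?_⟩
            · induction i using Fin.lastCases with
              | last => simpa using hy
              | cast i => simpa using h1 i
            · rw [Fin.sum_univ_castSucc]
              simp [h2]
        rw [Nat.card_congr e3, ih (s - y)]
        rcases eq_or_ne y s with rfl | hys
        · rw [if_pos (sub_self y), if_pos rfl]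
        · rw [if_neg (fun h => hys (sub_eq_zero.mp h).symm), if_neg hys]
    simp_rw [hfib]
    rcases eq_or_ne s 0 with rfl | hs
    · rw [if_pos rfl, psi_succ hq]
      have key : ∀ y : F, (if y = (0:F) then (0:ℤ) else if y = 0 then psi q n else phi q n)
          = phi q n - (if y = 0 then phi q n else 0) := by
        intro y; by_cases h : y = 0 <;> simp [h]
      simp_rw [key]
      rw [Finset.sum_sub_distrib, Finset.sum_const, card_univ, hF,
        Finset.sum_ite_eq' univ (0:F) (fun _ => phi q n), if_pos (mem_univ _)]
      push_cast
      ring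
    · rw [if_neg hs, phi_succ hq]
      have key : ∀ y : F, (if y = (0:F) then (0:ℤ) else if y = s then psi q n else phi q n)
          = ((if y = s then psi q n - phi q n else 0) + phi q n)
            - (if y = 0 then phi q n else 0) := by
        intro y
        by_cases h1 : y = 0
        · subst h1
          rw [if_pos rfl, if_neg (fun h => hs h.symm), if_pos rfl]
          ring
        · rw [if_neg h1, if_neg h1]
          by_cases h2 : y = s <;> simp [h2]
      simp_rw [key]
      rw [Finset.sum_sub_distrib, Finset.sum_add_distrib, Finset.sum_const, card_univ, hF,
        Finset.sum_ite_eq' univ (0:F) (fun _ => phi q n), if_pos (mem_univ _),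
        Finset.sum_ite_eq' univ s (fun _ => psi q n - phi q n), if_pos (mem_univ _)]
      push_cast
      ring

lemma countIdx {F : Type*} [Field F] [Fintype F] (q : ℕ) (hF : Fintype.card F = q)
    (ι : Type*) [Fintype ι] (w : ι → F) (hw : ∀ i, w i ≠ 0) (s : F) :
    (Nat.card {x : ι → F // (∀ i, x i ≠ 0) ∧ ∑ i, w i * x i = s} : ℤ)
      = if s = 0 then psi q (Fintype.card ι) else phi q (Fintype.card ι) := by
  have e1 : {x : ι → F // (∀ i, x i ≠ 0) ∧ ∑ i, w i * x i = s}
      ≃ {y : ι → F // (∀ i, y i ≠ 0) ∧ ∑ i, y i = s} := by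
    refine Equiv.subtypeEquiv (Equiv.piCongrRight fun i => Equiv.mulLeft₀ (w i) (hw i)) ?_
    intro x
    have hcoe : ∀ i, (Equiv.piCongrRight fun i => Equiv.mulLeft₀ (w i) (hw i)) x i
        = w i * x i := fun i => rfl
    simp only [hcoe]
    constructor
    · rintro ⟨h1, h2⟩
      exact ⟨fun i => mul_ne_zero (hw i) (h1 i), h2⟩
    · rintro ⟨h1, h2⟩
      exact ⟨fun i => fun h => h1 i (by rw [h, mul_zero]), h2⟩
  have e := Fintype.equivFin ι
  have e2 : {y : ι → F // (∀ i, y i ≠ 0) ∧ ∑ i, y i = s}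
      ≃ {z : Fin (Fintype.card ι) → F // (∀ j, z j ≠ 0) ∧ ∑ j, z j = s} := by
    refine Equiv.subtypeEquiv (Equiv.arrowCongr e (Equiv.refl F)) ?_
    intro y
    simp only [Equiv.arrowCongr, Equiv.coe_fn_mk, Equiv.refl_apply, Function.comp]
    constructor
    · rintro ⟨h1, h2⟩
      exact ⟨fun j => h1 _, by rw [Equiv.sum_comp e.symm y]; exact h2⟩
    · rintro ⟨h1, h2⟩
      refine ⟨fun i => by simpa using h1 (e i), ?_⟩
      rw [Equiv.sum_comp e.symm y] at h2; exact h2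
  rw [Nat.card_congr (e1.trans e2), countFin q hF _ s]

lemma Arev_cons (q a : ℕ) (L : List ℕ) (hL : L ≠ []) :
    Arev q (a :: L) = psi q L.sum * phi q a + (-1)^a * Arev q L := by
  cases L with
  | nil => exact absurd rfl hL
  | cons b t => rfl

theorem aux {F : Type*} [Field F] [Fintype F] (q : ℕ) (hF : Fintype.card F = q) :
    ∀ (l : ℕ) (r : Fin (l+1) → ℕ) (α : Fin (l+1) → F),
      Function.Injective α → (∀ i, α i ≠ 0) →
    (Nat.card {x : (i : Fin (l+1)) → Fin (r i) → F //
        (∀ i j, x i j ≠ 0) ∧ (∑ i, ∑ j, x i j) = 0 ∧ (∑ i, α i * ∑ j, x i j) = 0} : ℤ)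
      = Atup q (List.ofFn r) := by
  have hq : 2 ≤ q := hF ▸ Fintype.one_lt_card
  intro l
  induction l with
  | zero =>
    intro r α hinj hα0
    have hAt : Atup q (List.ofFn r) = psi q (r 0) := by
      simp [Atup, List.ofFn_succ, Arev]
    rw [hAt]
    have e : {x : (i : Fin 1) → Fin (r i) → F //
          (∀ i j, x i j ≠ 0) ∧ (∑ i, ∑ j, x i j) = 0 ∧ (∑ i, α i * ∑ j, x i j) = 0}
        ≃ {y : Fin (r 0) → F // (∀ j, y j ≠ 0) ∧ ∑ j, y j = 0} := by
      refine ⟨fun x => ⟨x.1 0, x.2.1 0, ?_⟩,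
        fun y => ⟨Fin.cons (α := fun i : Fin 1 => Fin (r i) → F) y.1 (fun i => i.elim0),
          ?_, ?_, ?_⟩, ?_, ?_⟩
      · have h := x.2.2.1
        rwa [Fin.sum_univ_one] at h
      · intro i
        induction i using Fin.cases with
        | zero => simpa using y.2.1
        | succ i => exact i.elim0
      · rw [Fin.sum_univ_one]
        simpa using y.2.2
      · rw [Fin.sum_univ_one]
        have : ∑ j, Fin.cons (α := fun i : Fin 1 => Fin (r i) → F) y.1 (fun i => i.elim0) 0 j
            = 0 := by simpa using y.2.2
        rw [this, mul_zero]
      · intro x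
        apply Subtype.ext
        funext i
        induction i using Fin.cases with
        | zero => simp
        | succ i => exact i.elim0
      · intro y
        apply Subtype.ext
        simp
    rw [Nat.card_congr e]
    have h := countFin q hF (r 0) 0
    rwa [if_pos rfl] at h
  | succ l ih =>
    intro r α hinj hα0
    set m : Fin (l+2) := Fin.last (l+1) with hm
    set r' : Fin (l+1) → ℕ := fun i => r i.castSucc with hr'
    set α' : Fin (l+1) → F := fun i => α i.castSucc with hα'
    set C : ((i : Fin (l+2)) → Fin (r i) → F) → Prop := fun x =>
      (∀ i j, x i j ≠ 0) ∧ (∑ i, ∑ j, x i j) = 0 ∧ (∑ i, α i * ∑ j, x i j) = 0 with hC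
    set E := Fin.snocEquiv (fun i : Fin (l+2) => Fin (r i) → F) with hE
    have e1 : {z : (Fin (r m) → F) × ((i : Fin (l+1)) → Fin (r' i) → F) // C (E z)}
        ≃ {x : (i : Fin (l+2)) → Fin (r i) → F // C x} :=
      Equiv.subtypeEquiv E (fun z => Iff.rfl)
    have e2 : {z : (Fin (r m) → F) × ((i : Fin (l+1)) → Fin (r' i) → F) // C (E z)}
        ≃ Σ y : Fin (r m) → F, {x' : (i : Fin (l+1)) → Fin (r' i) → F // C (E (y, x'))} :=
      Equiv.subtypeProdEquivSigmaSubtype (fun y x' => C (E (y, x')))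
    have hstart : (Nat.card {x : (i : Fin (l+2)) → Fin (r i) → F //
        (∀ i j, x i j ≠ 0) ∧ (∑ i, ∑ j, x i j) = 0 ∧ (∑ i, α i * ∑ j, x i j) = 0} : ℤ)
        = ∑ y : Fin (r m) → F,
            (Nat.card {x' : (i : Fin (l+1)) → Fin (r' i) → F // C (E (y, x'))} : ℤ) := by
      rw [show {x : (i : Fin (l+2)) → Fin (r i) → F //
        (∀ i j, x i j ≠ 0) ∧ (∑ i, ∑ j, x i j) = 0 ∧ (∑ i, α i * ∑ j, x i j) = 0}
          = {x // C x} from rfl, Nat.card_congr (e1.symm.trans e2), natCard_int_sigma]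
    -- fiber identification
    set D : F → ℤ := fun t => (Nat.card {x' : (i : Fin (l+1)) → Fin (r' i) → F //
        (∀ i j, x' i j ≠ 0) ∧ (∑ i, ∑ j, x' i j) = -t ∧
          (∑ i, α' i * ∑ j, x' i j) = -(α m * t)} : ℤ) with hD
    have hEapp : ∀ (y : Fin (r m) → F) (x' : (i : Fin (l+1)) → Fin (r' i) → F)
        (i : Fin (l+2)), E (y, x') i = Fin.snoc (α := fun i => Fin (r i) → F) x' y i := fun _ _ _ => rfl
    have hfib : ∀ y : Fin (r m) → F,
        (Nat.card {x' : (i : Fin (l+1)) → Fin (r' i) → F // C (E (y, x'))} : ℤ)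
          = if (∀ j, y j ≠ 0) then D (∑ j, y j) else 0 := by
      intro y
      by_cases hy : ∀ j, y j ≠ 0
      · rw [if_pos hy]; simp only [hD]
        norm_cast
        apply Nat.card_congr
        apply Equiv.subtypeEquivRight
        intro x'
        simp only [hC, hEapp]
        constructor
        · rintro ⟨h1, h2, h3⟩
          refine ⟨fun i j => by have := h1 i.castSucc j; rwa [Fin.snoc_castSucc] at this,
            ?_, ?_⟩
          · rw [Fin.sum_univ_castSucc] at h2
            simp only [Fin.snoc_castSucc, Fin.snoc_last] at h2
            exact add_eq_zero_iff_eq_neg.mp h2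
          · rw [Fin.sum_univ_castSucc] at h3
            simp only [Fin.snoc_castSucc, Fin.snoc_last] at h3
            exact add_eq_zero_iff_eq_neg.mp h3
        · rintro ⟨h1, h2, h3⟩
          refine ⟨?_, ?_, ?_⟩
          · intro i j
            induction i using Fin.lastCases with
            | last => rw [Fin.snoc_last]; exact hy j
            | cast i => rw [Fin.snoc_castSucc]; exact h1 i j
          · rw [Fin.sum_univ_castSucc]
            simp only [Fin.snoc_castSucc, Fin.snoc_last]
            rw [h2]; ring
          · rw [Fin.sum_univ_castSucc]
            simp only [Fin.snoc_castSucc, Fin.snoc_last]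
            rw [h3]; ring
      · rw [if_neg hy]
        push_neg at hy
        obtain ⟨j, hj⟩ := hy
        norm_cast
        rw [Nat.card_eq_zero]
        refine Or.inl ⟨fun ⟨x', hx'⟩ => ?_⟩
        have h1 := hx'.1 m j
        rw [hEapp, Fin.snoc_last] at h1
        exact h1 hj
    -- group the sum over y by the value of ∑ y
    have hcard : ∀ t : F,
        (Nat.card {y : Fin (r m) → F // (∀ j, y j ≠ 0) ∧ ∑ j, y j = t} : ℤ)
          = if t = 0 then psi q (r m) else phi q (r m) := fun t => countFin q hF (r m) t
    have hgroup : (∑ y : Fin (r m) → F,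
          (Nat.card {x' : (i : Fin (l+1)) → Fin (r' i) → F // C (E (y, x'))} : ℤ))
        = ∑ t : F, (if t = 0 then psi q (r m) else phi q (r m)) * D t := by
      rw [← Fintype.sum_fiberwise (fun y : Fin (r m) → F => ∑ j, y j)
        (fun y => (Nat.card {x' : (i : Fin (l+1)) → Fin (r' i) → F // C (E (y, x'))} : ℤ))]
      refine Finset.sum_congr rfl fun t _ => ?_
      have hinner : ∀ y : {y : Fin (r m) → F // (∑ j, y j) = t},
          (Nat.card {x' : (i : Fin (l+1)) → Fin (r' i) → F // C (E (y.1, x'))} : ℤ)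
            = (if (∀ j, y.1 j ≠ 0) then (1:ℤ) else 0) * D t := by
        rintro ⟨y, hy⟩
        rw [hfib y, hy]
        by_cases h : ∀ j, y j ≠ 0
        · rw [if_pos h, if_pos h, one_mul]
        · rw [if_neg h, if_neg h, zero_mul]
      calc (∑ y : {y : Fin (r m) → F // (∑ j, y j) = t},
              (Nat.card {x' : (i : Fin (l+1)) → Fin (r' i) → F // C (E (y.1, x'))} : ℤ))
          = ∑ y : {y : Fin (r m) → F // (∑ j, y j) = t},
              (if (∀ j, y.1 j ≠ 0) then (1:ℤ) else 0) * D t :=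
            Finset.sum_congr rfl fun y _ => hinner y
        _ = (∑ y : {y : Fin (r m) → F // (∑ j, y j) = t},
              (if (∀ j, y.1 j ≠ 0) then (1:ℤ) else 0)) * D t := by
            rw [Finset.sum_mul]
        _ = ((Finset.univ.filter
              (fun y : {y : Fin (r m) → F // (∑ j, y j) = t} => ∀ j, y.1 j ≠ 0)).card : ℤ)
              * D t := by rw [Finset.sum_boole]
        _ = (Nat.card {y : Fin (r m) → F // (∀ j, y j ≠ 0) ∧ ∑ j, y j = t} : ℤ) * D t := by
            rw [← Fintype.card_subtype, ← Nat.card_eq_fintype_card]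
            congr 2
            refine Nat.card_congr ?_
            exact (Equiv.subtypeSubtypeEquivSubtypeInter
              (fun y : Fin (r m) → F => (∑ j, y j) = t) (fun y => ∀ j, y j ≠ 0)).trans
              (Equiv.subtypeEquivRight fun y => and_comm)
        _ = (if t = 0 then psi q (r m) else phi q (r m)) * D t := by rw [hcard t]
    -- split off the t = 0 term
    have hsplit : (∑ t : F, (if t = 0 then psi q (r m) else phi q (r m)) * D t)
        = phi q (r m) * (∑ t : F, D t) + (psi q (r m) - phi q (r m)) * D 0 := by
      have key : ∀ t : F, (if t = 0 then psi q (r m) else phi q (r m)) * D t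
          = phi q (r m) * D t
            + (if t = 0 then (psi q (r m) - phi q (r m)) * D t else 0) := by
        intro t
        by_cases h : t = 0
        · rw [if_pos h, if_pos h]; ring
        · rw [if_neg h, if_neg h]; ring
      simp_rw [key]
      rw [Finset.sum_add_distrib, ← Finset.mul_sum,
        Finset.sum_ite_eq' univ (0:F) (fun t => (psi q (r m) - phi q (r m)) * D t),
        if_pos (mem_univ _)]
    -- the total over all t
    have hW : ∀ x' : (i : Fin (l+1)) → Fin (r' i) → F,
        (∑ i, ∑ j, (α' i - α m) * x' i j)
          = (∑ i, α' i * ∑ j, x' i j) - α m * (∑ i, ∑ j, x' i j) := by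
      intro x'
      rw [Finset.mul_sum, ← Finset.sum_sub_distrib]
      refine Finset.sum_congr rfl fun i _ => ?_
      rw [Finset.mul_sum, Finset.mul_sum, ← Finset.sum_sub_distrib]
      exact Finset.sum_congr rfl fun j _ => by ring
    have hEsum : (∑ t : F, D t)
        = (Nat.card {x' : (i : Fin (l+1)) → Fin (r' i) → F //
            (∀ i j, x' i j ≠ 0) ∧ ∑ i, ∑ j, (α' i - α m) * x' i j = 0} : ℤ) := by
      rw [Nat.card_congr (Equiv.sigmaFiberEquiv
        (fun e : {x' : (i : Fin (l+1)) → Fin (r' i) → F //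
            (∀ i j, x' i j ≠ 0) ∧ ∑ i, ∑ j, (α' i - α m) * x' i j = 0} =>
          -(∑ i, ∑ j, e.1 i j))).symm, natCard_int_sigma]
      refine Finset.sum_congr rfl fun t _ => ?_
      simp only [hD]
      norm_cast
      refine Nat.card_congr (Equiv.symm ?_)
      refine (Equiv.subtypeSubtypeEquivSubtypeInter
          (fun x' : (i : Fin (l+1)) → Fin (r' i) → F =>
            (∀ i j, x' i j ≠ 0) ∧ ∑ i, ∑ j, (α' i - α m) * x' i j = 0)
          (fun x' => -(∑ i, ∑ j, x' i j) = t)).trans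
        (Equiv.subtypeEquivRight fun x' => ?_)
      constructor
      · rintro ⟨⟨h1, h2⟩, h3⟩
        rw [hW] at h2
        refine ⟨h1, by rw [← h3, neg_neg], ?_⟩
        rw [← h3]
        linear_combination h2
      · rintro ⟨h1, h2, h3⟩
        refine ⟨⟨h1, ?_⟩, by rw [h2, neg_neg]⟩
        rw [hW, h3, h2]
        ring
    have hEval : (Nat.card {x' : (i : Fin (l+1)) → Fin (r' i) → F //
            (∀ i j, x' i j ≠ 0) ∧ ∑ i, ∑ j, (α' i - α m) * x' i j = 0} : ℤ)
        = psi q (∑ i, r' i) := by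
      have hw : ∀ p : (i : Fin (l+1)) × Fin (r' i), α' p.1 - α m ≠ 0 := by
        intro p
        refine sub_ne_zero.mpr fun h => ?_
        have := hinj h
        exact absurd this (Fin.castSucc_lt_last p.1).ne
      have e : {x' : (i : Fin (l+1)) → Fin (r' i) → F //
            (∀ i j, x' i j ≠ 0) ∧ ∑ i, ∑ j, (α' i - α m) * x' i j = 0}
          ≃ {z : ((i : Fin (l+1)) × Fin (r' i)) → F //
            (∀ p, z p ≠ 0) ∧ ∑ p, (α' p.1 - α m) * z p = 0} := by
        refine Equiv.subtypeEquiv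
          (Equiv.piCurry (fun (i : Fin (l+1)) (j : Fin (r' i)) => F)).symm ?_
        intro x'
        have happ : ∀ p : (i : Fin (l+1)) × Fin (r' i),
            (Equiv.piCurry (fun (i : Fin (l+1)) (j : Fin (r' i)) => F)).symm x' p
              = x' p.1 p.2 := fun p => rfl
        simp only [happ]
        constructor
        · rintro ⟨h1, h2⟩
          refine ⟨fun p => h1 p.1 p.2, ?_⟩
          rw [← Finset.univ_sigma_univ, Finset.sum_sigma]
          exact h2
        · rintro ⟨h1, h2⟩
          refine ⟨fun i j => h1 ⟨i, j⟩, ?_⟩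
          rw [← Finset.univ_sigma_univ, Finset.sum_sigma] at h2
          exact h2
      rw [Nat.card_congr e]
      have h := countIdx q hF ((i : Fin (l+1)) × Fin (r' i))
        (fun p => α' p.1 - α m) hw 0
      rw [if_pos rfl] at h
      rw [h]
      congr 1
      simp [Fintype.card_sigma]
    have hD0 : D 0 = Atup q (List.ofFn r') := by
      simp only [hD]
      have e : {x' : (i : Fin (l+1)) → Fin (r' i) → F //
            (∀ i j, x' i j ≠ 0) ∧ (∑ i, ∑ j, x' i j) = -(0:F) ∧
              (∑ i, α' i * ∑ j, x' i j) = -(α m * 0)}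
          ≃ {x' : (i : Fin (l+1)) → Fin (r' i) → F //
            (∀ i j, x' i j ≠ 0) ∧ (∑ i, ∑ j, x' i j) = 0 ∧
              (∑ i, α' i * ∑ j, x' i j) = 0} := by
        refine Equiv.subtypeEquivRight fun x' => ?_
        rw [neg_zero, mul_zero, neg_zero]
      rw [Nat.card_congr e]
      exact ih r' α' (fun a b h => Fin.castSucc_injective _ (hinj h)) (fun i => hα0 _)
    -- list manipulation for Atup
    have hlist : (List.ofFn r).reverse = r m :: (List.ofFn r').reverse := by
      rw [List.ofFn_succ' r, List.concat_eq_append, List.reverse_concat]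
    have hAtup : Atup q (List.ofFn r)
        = psi q (∑ i, r' i) * phi q (r m) + (-1)^(r m) * Atup q (List.ofFn r') := by
      have hne : (List.ofFn r').reverse ≠ [] := by
        intro h
        have := congrArg List.length h
        simp at this
      rw [Atup, hlist, Arev_cons q (r m) _ hne, List.sum_reverse, List.sum_ofFn]
      rfl
    rw [hstart, hgroup, hsplit, hEsum, hEval, hD0, hAtup, psi_eq_phi hq (r m)]
    ring

theorem stmt4 (q : ℕ) (F : Type*) [Field F] [Fintype F] (hF : Fintype.card F = q)
    (l : ℕ) (hl : 1 ≤ l) (r : Fin l → ℕ) (hr : ∀ i, 1 ≤ r i)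
    (α : Fin l → F) (hαinj : Function.Injective α) (hα0 : ∀ i, α i ≠ 0) :
    (Nat.card {x : (i : Fin l) → Fin (r i) → F //
        (∀ i j, x i j ≠ 0) ∧ (∑ i, ∑ j, x i j) = 0 ∧ (∑ i, α i * ∑ j, x i j) = 0} : ℤ)
      = Atup q (List.ofFn r) := by
  obtain ⟨l', rfl⟩ : ∃ l', l = l' + 1 := ⟨l - 1, (Nat.succ_pred_eq_of_pos hl).symm⟩
  exact aux q hF l' r α hαinj hα0
end

section
/- Let q > 5 be an odd prime power and let 3 ≤ h ≤ k be integers, and let D_2 = { x ∈ 𝔽_q^k \ {0} : x_i + x_j = 0 for some 1 ≤ i < j ≤ h }. Then: (i) for every 1 ≤ i < j ≤ h, the hyperplane {x ∈ 𝔽_q^k : x_i + x_j = 0} contains exactly q^{k−1} − 1 points of D_2; (ii) for every nonzero α ∈ 𝔽_q^k that is not of the form λ(e_i + e_j) for some λ ∈ 𝔽_q^* and 1 ≤ i < j ≤ h (e_i denoting the i-th standard basis vector), one has #{ x ∈ D_2 : ⟨α,x⟩ = 0 } < q^{k−1} − 1. Consequently the minimum weight of the code C_{D_2} is attained exactly by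 the hyperplanes x_i + x_j = 0 with 1 ≤ i < j ≤ h. -/
open Finset

private lemma aux_sum_mul_single {F : Type*} [Field F] {k : ℕ} (α : Fin k → F) (m : Fin k)
    (t : F) : ∑ i, α i * (Pi.single m t : Fin k → F) i = α m * t := by
  rw [Finset.sum_eq_single m (fun i _ hi => by rw [Pi.single_eq_of_ne hi, mul_zero]) (by simp)]
  rw [Pi.single_eq_same]


private lemma aux_single_mul_sum {F : Type*} [Field F] {k : ℕ} (x : Fin k → F) (m : Fin k)
    (t : F) : ∑ i, (Pi.single m t : Fin k → F) i * x i = t * x m := by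
  rw [Finset.sum_eq_single m (fun i _ hi => by rw [Pi.single_eq_of_ne hi, zero_mul]) (by simp)]
  rw [Pi.single_eq_same]

private lemma aux_ker_card {F : Type*} [Field F] [Fintype F] {k : ℕ} (α : Fin k → F)
    (hα : α ≠ 0) :
    Nat.card {x : Fin k → F // ∑ m, α m * x m = 0} = Fintype.card F ^ (k - 1) := by
  classical
  obtain ⟨m, hm⟩ : ∃ m, α m ≠ 0 := by
    by_contra hc; push_neg at hc; exact hα (funext fun i => hc i)
  set φ : (Fin k → F) →ₗ[F] F :=
    { toFun := fun x => ∑ m, α m * x m,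
      map_add' := fun a b => by simp [mul_add, Finset.sum_add_distrib],
      map_smul' := fun c a => by simp [Finset.mul_sum, mul_left_comm] } with hφ
  have hsurj : Function.Surjective φ := by
    intro c
    refine ⟨Pi.single m ((α m)⁻¹ * c), ?_⟩
    have hr : φ (Pi.single m ((α m)⁻¹ * c)) = ∑ i, α i * (Pi.single m ((α m)⁻¹ * c) : Fin k → F) i := rfl
    rw [hr, aux_sum_mul_single]
    field_simp
  have h1 : Module.finrank F (LinearMap.ker φ) = k - 1 := by
    have h2 := LinearMap.finrank_range_add_finrank_ker φ
    rw [LinearMap.range_eq_top.2 hsurj, finrank_top, Module.finrank_self,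
      Module.finrank_pi, Fintype.card_fin] at h2
    omega
  have e : {x : Fin k → F // ∑ m, α m * x m = 0} ≃ LinearMap.ker φ :=
    Equiv.subtypeEquivRight (fun x => by
      constructor
      · intro hx; exact LinearMap.mem_ker.2 hx
      · intro hx; exact LinearMap.mem_ker.1 hx)
  rw [Nat.card_congr e, Nat.card_eq_fintype_card, Module.card_eq_pow_finrank (K := F), h1]

private lemma aux_exists_good {F : Type*} [Field F] [Fintype F] {q k h : ℕ}
    (hq : 5 < q) (hF : Fintype.card F = q) (h2 : (2 : F) ≠ 0)
    (hh : 3 ≤ h) (hhk : h ≤ k) (α : Fin k → F) (hα : α ≠ 0)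
    (hne : ¬ ∃ (lam : F) (i j : Fin k), lam ≠ 0 ∧ (i : ℕ) < (j : ℕ) ∧ (j : ℕ) < h ∧
      α = lam • (Pi.single i (1 : F) + Pi.single j (1 : F))) :
    ∃ x : Fin k → F, (∑ m, α m * x m = 0) ∧
      ∀ i j : Fin k, (i : ℕ) < (j : ℕ) → (j : ℕ) < h → x i + x j ≠ 0 := by
  classical
  have h11 : (1 : F) + 1 ≠ 0 := by rw [one_add_one_eq_two]; exact h2
  set y : Fin k → F := fun i => if (i : ℕ) < h then 1 else 0 with hydef
  have hy1 : ∀ i : Fin k, (i : ℕ) < h → y i = 1 := fun i hi => if_pos hi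
  by_cases hcase : ∃ m : Fin k, ¬ ((m : ℕ) < h) ∧ α m ≠ 0
  · -- Case 1: some coordinate outside [0,h) has α m ≠ 0
    obtain ⟨m, hmh, hm⟩ := hcase
    refine ⟨y + Pi.single m (-(∑ i, α i * y i) / α m), ?_, ?_⟩
    · simp only [Pi.add_apply, mul_add, Finset.sum_add_distrib, aux_sum_mul_single]
      rw [mul_comm, div_mul_cancel₀ _ hm]
      ring
    · intro i j hij hjh
      have hih : (i : ℕ) < h := lt_trans hij hjh
      have him : i ≠ m := fun he => hmh (he ▸ hih)
      have hjm : j ≠ m := fun he => hmh (he ▸ hjh)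
      simp only [Pi.add_apply, Pi.single_eq_of_ne him, Pi.single_eq_of_ne hjm,
        hy1 i hih, hy1 j hjh, add_zero]
      exact h11
  · push_neg at hcase
    have hs : ∀ m : Fin k, α m ≠ 0 → (m : ℕ) < h := by
      intro m hm; by_contra hge; exact hm (hcase m (le_of_not_gt hge))
    have hSy : ∑ i, α i * y i = ∑ i, α i := by
      refine Finset.sum_congr rfl fun i _ => ?_
      by_cases hi : (i : ℕ) < h
      · rw [hy1 i hi, mul_one]
      · rw [hcase i (le_of_not_gt hi)]; ring
    set S : F := ∑ i, α i with hSdef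
    by_cases hc2 : ∃ a : Fin k, α a ≠ 0 ∧ S ≠ 2 * α a
    · -- Case 2a
      obtain ⟨a, ha, hSa⟩ := hc2
      refine ⟨y + (Pi.single a (-(S - α a) / α a - 1) : Fin k → F), ?_, ?_⟩
      · simp only [Pi.add_apply, mul_add, Finset.sum_add_distrib, aux_sum_mul_single, hSy]
        field_simp
        ring
      · intro i j hij hjh
        have hih : (i : ℕ) < h := lt_trans hij hjh
        have hij' : i ≠ j := fun he => by rw [he] at hij; exact lt_irrefl _ hij
        have hval : ∀ i' : Fin k, (i' : ℕ) < h →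
            (y + (Pi.single a (-(S - α a) / α a - 1) : Fin k → F)) i' =
            if i' = a then -(S - α a) / α a else 1 := by
          intro i' hi'
          simp only [Pi.add_apply, Pi.single_apply, hy1 i' hi']
          split_ifs <;> ring
        have ht1 : -(S - α a) / α a + 1 ≠ 0 := by
          intro hc
          apply hSa
          field_simp at hc
          linear_combination -hc
        rw [hval i hih, hval j hjh]
        split_ifs with h1 h3
        · exact absurd (h1.trans h3.symm) hij'
        · exact ht1
        · rw [add_comm]; exact ht1
        · exact h11
    · -- Case 2b
      push_neg at hc2
      have hall : ∀ a : Fin k, α a ≠ 0 → S = 2 * α a := hc2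
      set T : Finset (Fin k) := univ.filter (fun a => α a ≠ 0) with hTdef
      have hmemT : ∀ a : Fin k, a ∈ T ↔ α a ≠ 0 := by
        intro a; simp [hTdef]
      have hsumT : S = ∑ i ∈ T, α i := by
        rw [hSdef, hTdef, Finset.sum_filter_ne_zero]
      obtain ⟨a0, ha0⟩ : ∃ a, α a ≠ 0 := by
        by_contra hcon; push_neg at hcon; exact hα (funext fun i => hcon i)
      have hT3 : 2 < T.card := by
        by_contra hle
        push_neg at hle
        have h1le : 1 ≤ T.card := Finset.card_pos.2 ⟨a0, (hmemT a0).2 ha0⟩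
        rcases Nat.lt_or_ge T.card 2 with hc1 | hc2'
        · -- card = 1
          obtain ⟨a, hTa⟩ := Finset.card_eq_one.1 (le_antisymm (Nat.lt_succ_iff.mp hc1) h1le)
          have ha : α a ≠ 0 := (hmemT a).1 (hTa ▸ Finset.mem_singleton_self a)
          have hSa : S = α a := by rw [hsumT, hTa, Finset.sum_singleton]
          exact ha (by linear_combination hSa - hall a ha)
        · -- card = 2
          obtain ⟨a, b, hab, hTab⟩ := Finset.card_eq_two.1 (le_antisymm hle hc2')
          have ha : α a ≠ 0 := (hmemT a).1 (hTab ▸ by simp)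
          have hb : α b ≠ 0 := (hmemT b).1 (hTab ▸ by simp)
          have hba : α b = α a := mul_left_cancel₀ h2 ((hall b hb).symm.trans (hall a ha))
          have hrep : α = (α a) • (Pi.single a (1 : F) + Pi.single b (1 : F)) := by
            funext i
            by_cases hia : i = a
            · subst hia
              simp [Pi.single_eq_same, Pi.single_eq_of_ne hab]
            · by_cases hib : i = b
              · subst hib
                simp [Pi.single_eq_same, Pi.single_eq_of_ne (Ne.symm hab), hba]
              · have hiT : i ∉ T := by rw [hTab]; simp [hia, hib]
                have : α i = 0 := by
                  by_contra hcon; exact hiT ((hmemT i).2 hcon)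
                simp [this, Pi.single_eq_of_ne hia, Pi.single_eq_of_ne hib]
          apply hne
          rcases lt_or_gt_of_ne (fun hc => hab (Fin.val_injective hc) :
              (a : ℕ) ≠ (b : ℕ)) with hlt | hgt
          · exact ⟨α a, a, b, ha, hlt, hs b hb, hrep⟩
          · exact ⟨α a, b, a, ha, hgt, hs a ha, hrep.trans (by rw [add_comm])⟩
      obtain ⟨a, b, d, haT, hbT, hdT, hab, had, hbd⟩ := Finset.two_lt_card_iff.1 hT3
      have ha : α a ≠ 0 := (hmemT a).1 haT
      have hb : α b ≠ 0 := (hmemT b).1 hbT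
      have hd : α d ≠ 0 := (hmemT d).1 hdT
      have hba : α b = α a := mul_left_cancel₀ h2 ((hall b hb).symm.trans (hall a ha))
      have hda : α d = α a := mul_left_cancel₀ h2 ((hall d hd).symm.trans (hall a ha))
      -- choose u
      obtain ⟨u, hu1, hu2⟩ : ∃ u : F, u ≠ 1 ∧ u ≠ -1 := by
        have hcard2 : ({1, -1} : Finset F).card ≤ 2 :=
          (Finset.card_insert_le _ _).trans (by simp)
        have hlt : ({1, -1} : Finset F).card < Fintype.card F :=
          lt_of_le_of_lt hcard2 (by rw [hF]; omega)
        have hpos : 0 < (univ \ ({1, -1} : Finset F)).card := by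
          rw [Finset.card_sdiff_of_subset (Finset.subset_univ _), Finset.card_univ]
          exact Nat.sub_pos_of_lt hlt
        obtain ⟨u, hu⟩ := Finset.card_pos.1 hpos
        simp only [Finset.mem_sdiff, Finset.mem_insert, Finset.mem_singleton] at hu
        exact ⟨u, fun hc => hu.2 (Or.inl hc), fun hc => hu.2 (Or.inr hc)⟩
      -- choose v
      obtain ⟨v, hv1, hv2, hv3, hv4⟩ :
          ∃ v : F, v ≠ 1 ∧ v ≠ -1 ∧ v ≠ -u ∧ v ≠ 2 - u := by
        have hcard4 : ({1, -1, -u, 2 - u} : Finset F).card ≤ 4 := by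
          refine (Finset.card_insert_le _ _).trans (Nat.succ_le_succ ?_)
          refine (Finset.card_insert_le _ _).trans (Nat.succ_le_succ ?_)
          exact (Finset.card_insert_le _ _).trans (Nat.succ_le_succ (by simp))
        have hlt : ({1, -1, -u, 2 - u} : Finset F).card < Fintype.card F :=
          lt_of_le_of_lt hcard4 (by rw [hF]; omega)
        have hpos : 0 < (univ \ ({1, -1, -u, 2 - u} : Finset F)).card := by
          rw [Finset.card_sdiff_of_subset (Finset.subset_univ _), Finset.card_univ]
          exact Nat.sub_pos_of_lt hlt
        obtain ⟨v, hv⟩ := Finset.card_pos.1 hpos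
        simp only [Finset.mem_sdiff, Finset.mem_insert, Finset.mem_singleton] at hv
        push_neg at hv
        exact ⟨v, hv.2.1, hv.2.2.1, hv.2.2.2.1, hv.2.2.2.2⟩
      obtain ⟨w, hwdef⟩ : ∃ w : F, w = 1 - u - v := ⟨_, rfl⟩
      refine ⟨y + (Pi.single a (u - 1) : Fin k → F) + (Pi.single b (v - 1) : Fin k → F) + (Pi.single d (w - 1) : Fin k → F), ?_, ?_⟩
      · simp only [Pi.add_apply, mul_add, Finset.sum_add_distrib, aux_sum_mul_single, hSy]
        rw [hba, hda, hall a ha]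
        linear_combination (α a) * hwdef
      · intro i j hij hjh
        have hih : (i : ℕ) < h := lt_trans hij hjh
        have hij' : i ≠ j := fun he => by rw [he] at hij; exact lt_irrefl _ hij
        have hval : ∀ i' : Fin k, (i' : ℕ) < h →
            (y + (Pi.single a (u - 1) : Fin k → F) + (Pi.single b (v - 1) : Fin k → F) +
              (Pi.single d (w - 1) : Fin k → F)) i' =
            if i' = a then u else if i' = b then v else if i' = d then w else 1 := by
          intro i' hi'
          simp only [Pi.add_apply, Pi.single_apply, hy1 i' hi']
          split_ifs <;>
            first
              | ring1
              | exact absurd ((‹i' = a›).symm.trans ‹i' = b›) hab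
              | exact absurd ((‹i' = a›).symm.trans ‹i' = d›) had
              | exact absurd ((‹i' = b›).symm.trans ‹i' = d›) hbd
        -- pair-sum facts
        have huv : u + v ≠ 0 := fun hc => hv3 (by linear_combination hc)
        have huw : u + w ≠ 0 := fun hc => hv1 (by linear_combination hwdef - hc)
        have hvw : v + w ≠ 0 := fun hc => hu1 (by linear_combination hwdef - hc)
        have hu1' : u + 1 ≠ 0 := fun hc => hu2 (by linear_combination hc)
        have hv1' : v + 1 ≠ 0 := fun hc => hv2 (by linear_combination hc)
        have hw1' : w + 1 ≠ 0 := fun hc => hv4 (by linear_combination hwdef - hc)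
        have hvu : v + u ≠ 0 := by rw [add_comm]; exact huv
        have hwu : w + u ≠ 0 := by rw [add_comm]; exact huw
        have hwv : w + v ≠ 0 := by rw [add_comm]; exact hvw
        have h1u : (1 : F) + u ≠ 0 := by rw [add_comm]; exact hu1'
        have h1v : (1 : F) + v ≠ 0 := by rw [add_comm]; exact hv1'
        have h1w : (1 : F) + w ≠ 0 := by rw [add_comm]; exact hw1'
        rw [hval i hih, hval j hjh]
        split_ifs <;> first | assumption | simp_all


theorem stmt10 (q : ℕ) (hq : 5 < q) (hodd : Odd q) (F : Type*) [Field F] [Fintype F]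
    (hF : Fintype.card F = q)
    (k h : ℕ) (hh : 3 ≤ h) (hhk : h ≤ k)
    (D2 : Set (Fin k → F))
    (hD2 : D2 = {x | x ≠ 0 ∧ ∃ i j : Fin k, (i : ℕ) < (j : ℕ) ∧ (j : ℕ) < h ∧ x i + x j = 0}) :
    -- (i)
    (∀ i j : Fin k, (i : ℕ) < (j : ℕ) → (j : ℕ) < h →
      Nat.card {x : Fin k → F // x ∈ D2 ∧ x i + x j = 0} = q ^ (k - 1) - 1)
    ∧
    -- (ii)
    (∀ α : Fin k → F, α ≠ 0 →
      (¬ ∃ (lam : F) (i j : Fin k), lam ≠ 0 ∧ (i : ℕ) < (j : ℕ) ∧ (j : ℕ) < h ∧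
          α = lam • (Pi.single i (1 : F) + Pi.single j (1 : F))) →
      Nat.card {x : Fin k → F // x ∈ D2 ∧ ∑ m, α m * x m = 0} < q ^ (k - 1) - 1) := by
  classical
  have hchar : ringChar F ≠ 2 := by
    intro hc
    have hev := FiniteField.even_card_of_char_two hc
    rw [hF] at hev
    rcases hodd with ⟨m, hm⟩
    omega
  have h2 : (2 : F) ≠ 0 := by
    intro hc
    have hdvd : ringChar F ∣ 2 := (ringChar.spec F 2).1 (by exact_mod_cast hc)
    rcases (Nat.dvd_prime Nat.prime_two).1 hdvd with h1 | h1
    · have hone : ((1 : ℕ) : F) = 0 := (ringChar.spec F 1).2 (h1 ▸ dvd_refl _)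
      simp at hone
    · exact hchar h1
  constructor
  · -- part (i)
    intro i j hij hjh
    have hijne : i ≠ j := fun he => by rw [he] at hij; exact lt_irrefl _ hij
    set β : Fin k → F := Pi.single i (1 : F) + Pi.single j (1 : F) with hβ
    have hsum : ∀ x : Fin k → F, ∑ m, β m * x m = x i + x j := by
      intro x
      rw [hβ]
      simp only [Pi.add_apply, add_mul, Finset.sum_add_distrib]
      rw [aux_single_mul_sum, aux_single_mul_sum, one_mul, one_mul]
    have hβ0 : β ≠ 0 := by
      intro hz
      have hzi := congrFun hz i
      rw [hβ] at hzi
      simp only [Pi.add_apply, Pi.single_eq_same, Pi.single_eq_of_ne hijne, add_zero,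
        Pi.zero_apply] at hzi
      exact one_ne_zero hzi
    have e : {x : Fin k → F // x ∈ D2 ∧ x i + x j = 0} ≃
        {x : Fin k → F // (∑ m, β m * x m = 0) ∧ x ≠ 0} :=
      Equiv.subtypeEquivRight (fun x => by
        subst hD2
        simp only [Set.mem_setOf_eq, hsum x]
        constructor
        · rintro ⟨⟨hx0, -⟩, hxij⟩; exact ⟨hxij, hx0⟩
        · rintro ⟨hxij, hx0⟩; exact ⟨⟨hx0, i, j, hij, hjh, hxij⟩, hxij⟩)
    rw [Nat.card_congr e]
    have hker := aux_ker_card β hβ0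
    rw [Nat.card_eq_fintype_card, Fintype.card_subtype, hF] at hker
    rw [Nat.card_eq_fintype_card, Fintype.card_subtype]
    have hfilter : (univ.filter fun x : Fin k → F => (∑ m, β m * x m = 0) ∧ x ≠ 0)
        = (univ.filter fun x : Fin k → F => (∑ m, β m * x m = 0)).erase 0 := by
      ext x
      simp only [Finset.mem_filter, Finset.mem_erase, Finset.mem_univ, true_and]
      tauto
    rw [hfilter, Finset.card_erase_of_mem (by simp), hker]
  · -- part (ii)
    intro α hα hne
    obtain ⟨z, hzsum, hzgood⟩ := aux_exists_good hq hF h2 hh hhk α hα hne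
    have hz0 : z ≠ 0 := by
      intro he
      have hk3 : 0 < k := by omega
      have hk3' : 1 < k := by omega
      apply hzgood ⟨0, hk3⟩ ⟨1, hk3'⟩ (by simp) (by simp; omega)
      rw [he]
      simp
    set s : Finset (Fin k → F) := univ.filter (fun x => ∑ m, α m * x m = 0) with hsdef
    have hscard : s.card = q ^ (k - 1) := by
      have hker := aux_ker_card α hα
      rw [Nat.card_eq_fintype_card, Fintype.card_subtype, hF] at hker
      exact hker
    have h0s : (0 : Fin k → F) ∈ s := by simp [hsdef]
    have hzs : z ∈ s := by simp [hsdef, hzsum]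
    have hsubset : (univ.filter fun x : Fin k → F => x ∈ D2 ∧ ∑ m, α m * x m = 0)
        ⊆ (s.erase 0).erase z := by
      intro x hx
      rw [Finset.mem_filter] at hx
      obtain ⟨-, hxD2, hxsum⟩ := hx
      rw [hD2] at hxD2
      obtain ⟨hx0, i, j, hij, hjh, hpair⟩ := hxD2
      rw [Finset.mem_erase, Finset.mem_erase]
      refine ⟨fun he => ?_, hx0, by simp [hsdef, hxsum]⟩
      exact hzgood i j hij hjh (he ▸ hpair)
    have hcards : ((s.erase 0).erase z).card = q ^ (k - 1) - 2 := by
      rw [Finset.card_erase_of_mem (Finset.mem_erase.2 ⟨hz0, hzs⟩),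
        Finset.card_erase_of_mem h0s, hscard]
      omega
    have hle : Nat.card {x : Fin k → F // x ∈ D2 ∧ ∑ m, α m * x m = 0} ≤ q ^ (k - 1) - 2 := by
      rw [Nat.card_eq_fintype_card, Fintype.card_subtype]
      rw [← hcards]
      exact Finset.card_le_card hsubset
    have hkk : k - 1 ≠ 0 :=
      Nat.sub_ne_zero_of_lt (lt_of_lt_of_le (by norm_num) (le_trans hh hhk))
    have hpow : q ≤ q ^ (k - 1) := Nat.le_self_pow hkk q
    have h1m : 1 < q ^ (k - 1) := lt_of_lt_of_le (lt_trans (by norm_num) hq) hpow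
    exact lt_of_le_of_lt hle (Nat.sub_lt_sub_left h1m (by norm_num))
end

section
/- Let q be an odd prime power and let 3 ≤ h ≤ k be integers. Then the cardinality of D_3 = { x ∈ 𝔽_q^k \ {0} : x_i = 0 for some 1 ≤ i ≤ h, or x_i + x_j = 0 for some 1 ≤ i < j ≤ h } equals q^{k−h}·(q^h − Γ(h,q)) − 1. -/
/-- `S(x,y)`: the number of surjective functions from a set of size `x` onto a set of size `y`. -/
noncomputable def numSurj (x y : ℕ) : ℕ := Nat.card {f : Fin x → Fin y // Function.Surjective f}

/-- `Γ(h,q) = ∑_{s=1}^{min(h,(q-1)/2)} ((q-1)(q-3)⋯(q-2s+1)/s!)·S(h,s)`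
(the inner division is exact). -/
noncomputable def Gamma (q h : ℕ) : ℕ :=
  ∑ s ∈ Finset.Icc 1 (min h ((q - 1) / 2)),
    ((∏ t ∈ Finset.range s, (q - 1 - 2 * t)) / Nat.factorial s) * numSurj h s


open Finset Function

section AuxLemmas

lemma numSurj_eq_zero_of_lt {h s : ℕ} (hs : h < s) : numSurj h s = 0 := by
  rw [numSurj, Nat.card_eq_zero]
  left
  rw [isEmpty_subtype]
  intro f hf
  exact absurd (Fintype.card_le_of_surjective f hf) (by simpa using hs)

lemma numSurj_zero {h : ℕ} (hh : 0 < h) : numSurj h 0 = 0 := by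
  rw [numSurj, Nat.card_eq_zero]
  left
  rw [isEmpty_subtype]
  intro f hf
  exact (f ⟨0, hh⟩).elim0


lemma prod_div_fact {q m s : ℕ} (hq : q - 1 = 2 * m) (_hs : s ≤ m) :
    (∏ t ∈ Finset.range s, (q - 1 - 2 * t)) / Nat.factorial s
      = 2 ^ s * Nat.choose m s := by
  have h1 : ∀ t ∈ Finset.range s, q - 1 - 2 * t = 2 * (m - t) := by
    intro t ht; omega
  rw [Finset.prod_congr rfl h1, Finset.prod_mul_distrib, Finset.prod_const,
    ← Nat.descFactorial_eq_prod_range, Nat.descFactorial_eq_factorial_mul_choose,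
    Finset.card_range, Nat.mul_div_assoc _ ⟨_, rfl⟩,
    Nat.mul_div_cancel_left _ (Nat.factorial_pos s)]


lemma exists_half {F : Type*} [Field F] [DecidableEq F]
    (A : Finset F) (h1 : ∀ a ∈ A, -a ∈ A) (h2 : ∀ a ∈ A, -a ≠ a) :
    ∃ H : Finset F, H ⊆ A ∧ (∀ a ∈ A, a ∈ H ∨ -a ∈ H) ∧ (∀ a ∈ H, -a ∉ H) ∧
      A.card = 2 * H.card := by
  induction A using Finset.strongInduction with
  | _ A ih =>
    rcases A.eq_empty_or_nonempty with rfl | ⟨a, ha⟩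
    · exact ⟨∅, by simp⟩
    · have hna : -a ∈ A := h1 a ha
      have hne : -a ≠ a := h2 a ha
      set A' := (A.erase a).erase (-a) with hA'
      have hmem : ∀ b, b ∈ A' ↔ b ∈ A ∧ b ≠ a ∧ b ≠ -a := by
        intro b; simp [hA', Finset.mem_erase]; tauto
      have hssub : A' ⊂ A :=
        Finset.ssubset_of_subset_of_ssubset (Finset.erase_subset _ _)
          (Finset.erase_ssubset ha)
      obtain ⟨H', hsub', hcov', hdisj', hcard'⟩ := ih A' hssub
        (by intro b hb
            rcases (hmem b).1 hb with ⟨hbA, hb1, hb2⟩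
            exact (hmem (-b)).2 ⟨h1 b hbA, fun h => hb2 (by rw [← neg_neg b, h]),
              fun h => hb1 (neg_injective h)⟩)
        (by intro b hb; exact h2 b ((hmem b).1 hb).1)
      have haH' : a ∉ H' := fun h => by simpa [hmem] using hsub' h
      refine ⟨insert a H', ?_, ?_, ?_, ?_⟩
      · exact Finset.insert_subset ha (hsub'.trans (fun b hb => ((hmem b).1 hb).1))
      · intro b hb
        by_cases hb1 : b = a
        · exact Or.inl (by simp [hb1])
        by_cases hb2 : b = -a
        · exact Or.inr (by simp [hb2])
        · rcases hcov' b ((hmem b).2 ⟨hb, hb1, hb2⟩) with h | h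
          · exact Or.inl (Finset.mem_insert_of_mem h)
          · exact Or.inr (Finset.mem_insert_of_mem h)
      · intro b hb
        rcases Finset.mem_insert.1 hb with rfl | hb'
        · intro hc
          rcases Finset.mem_insert.1 hc with h | h
          · exact hne h
          · simpa [hmem] using hsub' h
        · intro hc
          rcases Finset.mem_insert.1 hc with h | h
          · exact absurd ((hmem b).1 (hsub' hb')).2.2 (by rw [← neg_neg b, h]; simp)
          · exact hdisj' b hb' h
      · have e1 : (A.erase a).card + 1 = A.card := Finset.card_erase_add_one ha
        have e2 : A'.card + 1 = (A.erase a).card :=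
          Finset.card_erase_add_one (Finset.mem_erase.2 ⟨hne, hna⟩)
        rw [Finset.card_insert_of_notMem haH']
        omega


lemma card_fiber {F : Type*} [DecidableEq F] {h : ℕ} (S : Finset F) :
    Nat.card {y : Fin h → F // Finset.image y Finset.univ = S} = numSurj h S.card := by
  rw [numSurj]
  apply Nat.card_congr
  have hmem : ∀ (y : {y : Fin h → F // Finset.image y Finset.univ = S}) (i : Fin h),
      y.1 i ∈ S := by
    intro y i
    have := Finset.mem_image_of_mem y.1 (Finset.mem_univ i)
    rwa [y.2] at this
  refine ⟨fun y => ⟨fun i => S.equivFin ⟨y.1 i, hmem y i⟩, ?_⟩,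
    fun f => ⟨fun i => (S.equivFin.symm (f.1 i) : F), ?_⟩, ?_, ?_⟩
  · intro c
    obtain ⟨i, hi⟩ : ∃ i : Fin h, y.1 i = (S.equivFin.symm c : F) := by
      have : (S.equivFin.symm c : F) ∈ Finset.image y.1 Finset.univ := by
        rw [y.2]; exact (S.equivFin.symm c).2
      simpa using this
    exact ⟨i, (Equiv.apply_eq_iff_eq_symm_apply _).2 (Subtype.ext hi)⟩
  · ext a
    simp only [Finset.mem_image, Finset.mem_univ, true_and]
    constructor
    · rintro ⟨i, rfl⟩; exact (S.equivFin.symm (f.1 i)).2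
    · intro haS
      obtain ⟨i, hi⟩ := f.2 (S.equivFin ⟨a, haS⟩)
      exact ⟨i, by rw [hi]; simp⟩
  · intro y; ext i; simp
  · intro f; ext i; simp


variable {F : Type*} [Field F] [DecidableEq F] [Fintype F]

lemma fiber_card (H T : Finset F)
    (hH0 : ∀ a ∈ H, a ≠ (0:F)) (hdisj : ∀ a ∈ H, -a ∉ H)
    (hTH : T ⊆ H) (s : ℕ) (hTs : T.card = s) (nrm : F → F)
    (hnrm : ∀ a : F, nrm a = if a ∈ H then a else -a)
    (_nrm_mem : ∀ a : F, a ≠ 0 → nrm a ∈ H) [Fintype F] :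
    (((Finset.univ : Finset (Finset F)).filter
        (fun S => ((0:F) ∉ S ∧ ∀ a ∈ S, -a ∉ S) ∧ S.card = s)).filter
      (fun S => S.image nrm = T)).card = 2 ^ s := by
  classical
  have f2 : ∀ t : ↥T, (t:F) ≠ 0 := fun t => hH0 t (hTH t.2)
  have f1 : ∀ t t' : ↥T, (t:F) ≠ -(t':F) := by
    intro t t' he
    exact hdisj t' (hTH t'.2) (he ▸ hTH t.2)
  have f3 : ∀ t t' : ↥T, (t:F) = (t':F) → t = t' := fun t t' h => Subtype.ext h
  have mem_g : ∀ (σ : ↥T → Bool) (b : F),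
      b ∈ T.attach.image (fun t => if σ t then (t:F) else -(t:F)) ↔
        ∃ t : ↥T, (σ t = true ∧ b = (t:F)) ∨ (σ t = false ∧ b = -(t:F)) := by
    intro σ b
    simp only [Finset.mem_image, Finset.mem_attach, true_and]
    constructor
    · rintro ⟨t, ht⟩
      cases hb : σ t with
      | true => rw [hb] at ht; simp only [if_true] at ht; exact ⟨t, Or.inl ⟨hb, ht.symm⟩⟩
      | false => rw [hb] at ht; simp only [if_false, Bool.false_eq_true] at ht
                 exact ⟨t, Or.inr ⟨hb, ht.symm⟩⟩
    · rintro ⟨t, ⟨hb, rfl⟩ | ⟨hb, rfl⟩⟩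
      · exact ⟨t, by rw [hb]; simp⟩
      · exact ⟨t, by rw [hb]; simp⟩
  have nrm_t : ∀ t : ↥T, nrm (t:F) = (t:F) := by
    intro t; rw [hnrm]; simp [hTH t.2]
  have nrm_nt : ∀ t : ↥T, nrm (-(t:F)) = (t:F) := by
    intro t; rw [hnrm]
    have : -(t:F) ∉ H := hdisj _ (hTH t.2)
    simp [this]
  rw [Finset.card_bij' (t := (Finset.univ : Finset ((↥T) → Bool)))
    (i := fun S _ => fun t => decide ((t:F) ∈ S))
    (j := fun σ _ => T.attach.image (fun t => if σ t then (t:F) else -(t:F)))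
    ?_ ?_ ?_ ?_]
  · rw [Finset.card_univ, Fintype.card_fun, Fintype.card_coe, hTs, Fintype.card_bool]
  · intro S hS; exact Finset.mem_univ _
  · -- j maps into the fiber
    intro σ _
    simp only [Finset.mem_filter, Finset.mem_univ, true_and]
    refine ⟨⟨⟨?_, ?_⟩, ?_⟩, ?_⟩
    · intro h0
      obtain ⟨t, ⟨_, ht⟩ | ⟨_, ht⟩⟩ := (mem_g σ 0).1 h0
      · exact f2 t ht.symm
      · exact f2 t (neg_eq_zero.1 ht.symm)
    · intro a ha hna
      obtain ⟨t1, ⟨e1, rfl⟩ | ⟨e1, rfl⟩⟩ := (mem_g σ a).1 ha <;>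
        obtain ⟨t2, ⟨e2, h2⟩ | ⟨e2, h2⟩⟩ := (mem_g σ _).1 hna
      · exact f1 t2 t1 h2.symm
      · have ht12 : t1 = t2 := f3 _ _ (neg_injective h2)
        rw [ht12, e2] at e1; simp at e1
      · rw [neg_neg] at h2
        have ht12 : t1 = t2 := f3 _ _ h2
        rw [ht12, e2] at e1; simp at e1
      · rw [neg_neg] at h2
        exact f1 t1 t2 h2
    · -- card
      rw [Finset.card_image_of_injOn, Finset.card_attach, hTs]
      intro t1 _ t2 _ he
      by_cases b1 : σ t1 <;> by_cases b2 : σ t2 <;> simp only [b1, b2, if_true, if_false] at he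
      · exact f3 _ _ he
      · exact absurd he (f1 t1 t2)
      · exact absurd he.symm (f1 t2 t1)
      · exact f3 _ _ (neg_injective he)
    · -- image nrm = T
      rw [Finset.image_image]
      have : ∀ t ∈ T.attach, (nrm ∘ fun t : ↥T => if σ t then (t:F) else -(t:F)) t = (t:F) := by
        intro t _
        by_cases b : σ t <;> simp only [comp_apply, b, if_true, if_false]
        · exact nrm_t t
        · exact nrm_nt t
      rw [Finset.image_congr this, Finset.attach_image_val]
  · -- left inverse
    intro S hS
    simp only [Finset.mem_filter, Finset.mem_univ, true_and] at hS
    obtain ⟨⟨⟨hS0, hSneg⟩, hScard⟩, hSim⟩ := hS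
    ext a
    rw [mem_g]
    constructor
    · rintro ⟨t, ⟨hb, rfl⟩ | ⟨hb, rfl⟩⟩
      · exact of_decide_eq_true hb
      · have htS : (t:F) ∉ S := of_decide_eq_false hb
        have : (t:F) ∈ S.image nrm := hSim ▸ t.2
        obtain ⟨b, hbS, hbnrm⟩ := Finset.mem_image.1 this
        rw [hnrm] at hbnrm
        by_cases hbH : b ∈ H
        · rw [if_pos hbH] at hbnrm; exact absurd (hbnrm ▸ hbS) htS
        · rw [if_neg hbH] at hbnrm
          have : b = -(t:F) := by rw [← hbnrm]; simp
          exact this ▸ hbS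
    · intro haS
      have ha0 : a ≠ 0 := fun h => hS0 (h ▸ haS)
      have hmemT : nrm a ∈ T := hSim ▸ Finset.mem_image_of_mem nrm haS
      refine ⟨⟨nrm a, hmemT⟩, ?_⟩
      show decide (nrm a ∈ S) = true ∧ a = nrm a ∨ decide (nrm a ∈ S) = false ∧ a = -(nrm a)
      by_cases hbH : a ∈ H
      · have hna : nrm a = a := by rw [hnrm]; simp [hbH]
        exact Or.inl ⟨decide_eq_true (by rw [hna]; exact haS), hna.symm⟩
      · have hna : nrm a = -a := by rw [hnrm]; simp [hbH]
        exact Or.inr ⟨decide_eq_false (by rw [hna]; exact hSneg a haS), by rw [hna, neg_neg]⟩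
  · -- right inverse
    intro σ _
    funext t
    show decide ((t:F) ∈ T.attach.image (fun t => if σ t then (t:F) else -(t:F))) = σ t
    by_cases hb : σ t = true
    · rw [hb]
      apply decide_eq_true
      rw [mem_g]
      exact ⟨t, Or.inl ⟨hb, rfl⟩⟩
    · rw [Bool.not_eq_true] at hb
      rw [hb]
      apply decide_eq_false
      rw [mem_g]
      rintro ⟨t', ⟨hb', he⟩ | ⟨hb', he⟩⟩
      · rw [f3 t t' he, hb'] at hb; simp at hb
      · exact f1 t t' he

lemma count_valid (H : Finset F)
    (hH0 : ∀ a ∈ H, a ≠ (0:F)) (hcov : ∀ a : F, a ≠ 0 → a ∈ H ∨ -a ∈ H)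
    (hdisj : ∀ a ∈ H, -a ∉ H) (s : ℕ) :
    ((Finset.univ : Finset (Finset F)).filter
        (fun S => ((0:F) ∉ S ∧ ∀ a ∈ S, -a ∉ S) ∧ S.card = s)).card
      = 2 ^ s * Nat.choose H.card s := by
  classical
  set nrm : F → F := fun a => if a ∈ H then a else -a with hnrmdef
  have hnrm : ∀ a : F, nrm a = if a ∈ H then a else -a := fun a => rfl
  have nrm_mem : ∀ a : F, a ≠ 0 → nrm a ∈ H := by
    intro a ha
    rw [hnrm]
    by_cases h : a ∈ H
    · simpa [h] using h
    · rcases hcov a ha with h' | h'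
      · exact absurd h' h
      · simpa [h] using h'
  rw [Finset.card_eq_sum_card_fiberwise
    (f := fun S : Finset F => S.image nrm) (t := H.powersetCard s) ?_]
  · rw [Finset.sum_congr rfl (fun T hT => fiber_card H T hH0 hdisj
      (Finset.mem_powersetCard.1 hT).1 s (Finset.mem_powersetCard.1 hT).2 nrm hnrm nrm_mem)]
    rw [Finset.sum_const, Finset.card_powersetCard, smul_eq_mul, mul_comm]
  · intro S hS
    simp only [Finset.mem_coe, Finset.mem_filter, Finset.mem_univ, true_and] at hS
    obtain ⟨⟨hS0, hSneg⟩, hScard⟩ := hS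
    rw [Finset.mem_coe, Finset.mem_powersetCard]
    constructor
    · intro b hb
      obtain ⟨a, haS, rfl⟩ := Finset.mem_image.1 hb
      exact nrm_mem a (fun h => hS0 (h ▸ haS))
    · rw [Finset.card_image_of_injOn, hScard]
      intro a haS b hbS he
      rw [hnrm a, hnrm b] at he
      by_cases ha : a ∈ H <;> by_cases hb : b ∈ H <;>
        simp only [ha, hb, if_true, if_false] at he
      · exact he
      · exact absurd (Finset.mem_coe.1 (he ▸ haS)) (hSneg b (Finset.mem_coe.1 hbS))
      · exact absurd (Finset.mem_coe.1 hbS) (he ▸ hSneg a (Finset.mem_coe.1 haS))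
      · exact neg_injective he

lemma good_count (q h : ℕ) (hodd : Odd q) (hF : Fintype.card F = q)
    (hne : ∀ a : F, a ≠ 0 → -a ≠ a) (hh : 0 < h) :
    ((Finset.univ : Finset (Fin h → F)).filter
        (fun y => (∀ i, y i ≠ 0) ∧ ∀ i j, y i ≠ -(y j))).card = Gamma q h := by
  classical
  have hq1 : 1 ≤ q := by
    rcases hodd with ⟨r, hr⟩; omega
  -- the half set
  obtain ⟨H, hHsub, hHcov, hHdisj, hHcard⟩ :=
    exists_half ((Finset.univ : Finset F).filter (fun a => a ≠ 0))
      (by intro a ha; simp only [Finset.mem_filter, Finset.mem_univ, true_and] at *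
          exact neg_ne_zero.2 ha)
      (by intro a ha; simp only [Finset.mem_filter, Finset.mem_univ, true_and] at ha
          exact hne a ha)
  set m := H.card with hm
  have hAcard : ((Finset.univ : Finset F).filter (fun a => a ≠ 0)).card = q - 1 := by
    rw [Finset.filter_ne', Finset.card_erase_of_mem (Finset.mem_univ 0), Finset.card_univ, hF]
  have hq2m : q - 1 = 2 * m := by rw [← hAcard]; exact hHcard
  have hH0 : ∀ a ∈ H, a ≠ (0:F) := by
    intro a ha
    have := hHsub ha
    simpa using this
  have hcov : ∀ a : F, a ≠ 0 → a ∈ H ∨ -a ∈ H := by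
    intro a ha
    exact hHcov a (by simpa using ha)
  -- group good tuples by image
  rw [Finset.card_eq_sum_card_fiberwise
    (f := fun y : Fin h → F => Finset.image y Finset.univ)
    (t := (Finset.univ : Finset (Finset F)).filter
      (fun S => (0:F) ∉ S ∧ ∀ a ∈ S, -a ∉ S)) ?_]
  · -- each fiber is counted by numSurj
    have step1 : ∀ S ∈ (Finset.univ : Finset (Finset F)).filter
        (fun S => (0:F) ∉ S ∧ ∀ a ∈ S, -a ∉ S),
        ((((Finset.univ : Finset (Fin h → F))).filter
            (fun y => (∀ i, y i ≠ 0) ∧ ∀ i j, y i ≠ -(y j))).filter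
          (fun y => Finset.image y Finset.univ = S)).card
          = numSurj h S.card := by
      intro S hS
      simp only [Finset.mem_filter, Finset.mem_univ, true_and] at hS
      obtain ⟨hS0, hSneg⟩ := hS
      have : (((Finset.univ : Finset (Fin h → F))).filter
            (fun y => (∀ i, y i ≠ 0) ∧ ∀ i j, y i ≠ -(y j))).filter
          (fun y => Finset.image y Finset.univ = S)
          = (Finset.univ : Finset (Fin h → F)).filter
            (fun y => Finset.image y Finset.univ = S) := by
        rw [Finset.filter_filter]
        apply Finset.filter_congr
        intro y _
        constructor
        · rintro ⟨_, h2⟩; exact h2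
        · intro h2
          refine ⟨⟨?_, ?_⟩, h2⟩
          · intro i hi
            exact hS0 (h2 ▸ hi ▸ Finset.mem_image_of_mem y (Finset.mem_univ i))
          · intro i j he
            exact hSneg (y j) (h2 ▸ Finset.mem_image_of_mem y (Finset.mem_univ j))
              (he ▸ h2 ▸ Finset.mem_image_of_mem y (Finset.mem_univ i))
      rw [this, ← Fintype.card_subtype, ← Nat.card_eq_fintype_card]
      exact card_fiber S
    rw [Finset.sum_congr rfl step1]
    -- now group by cardinality
    rw [← Finset.sum_fiberwise_of_maps_to (g := fun S : Finset F => S.card)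
      (t := Finset.range (q + 1))
      (by intro S _
          rw [Finset.mem_range]
          exact Nat.lt_succ_of_le (hF ▸ Finset.card_le_univ S))]
    have step2 : ∀ s ∈ Finset.range (q + 1),
        (∑ S ∈ ((Finset.univ : Finset (Finset F)).filter
            (fun S => (0:F) ∉ S ∧ ∀ a ∈ S, -a ∉ S)).filter
          (fun S => S.card = s), numSurj h S.card)
          = (2 ^ s * Nat.choose m s) * numSurj h s := by
      intro s _
      rw [Finset.sum_congr rfl (fun S hS => by
        rw [(Finset.mem_filter.1 hS).2]), Finset.sum_const, smul_eq_mul]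
      congr 1
      rw [Finset.filter_filter]
      exact count_valid H hH0 hcov hHdisj s
    rw [Finset.sum_congr rfl step2]
    -- identify with Gamma
    have hmin : (q - 1) / 2 = m := by omega
    rw [Gamma, hmin]
    symm
    rw [← Finset.sum_subset (s₁ := Finset.Icc 1 (min h m)) (s₂ := Finset.range (q + 1))
      (by intro x hx
          rw [Finset.mem_Icc] at hx
          rw [Finset.mem_range]
          have : min h m ≤ m := min_le_right _ _
          omega)
      (by intro s _ hs
          rw [Finset.mem_Icc] at hs
          by_cases h0 : s = 0
          · rw [h0, numSurj_zero hh, mul_zero]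
          by_cases hsh : s ≤ h
          · have : m < s := by omega
            rw [Nat.choose_eq_zero_of_lt this, mul_zero, zero_mul]
          · rw [numSurj_eq_zero_of_lt (by omega), mul_zero])]
    apply Finset.sum_congr rfl
    intro s hs
    rw [Finset.mem_Icc] at hs
    rw [prod_div_fact hq2m (le_trans hs.2 (min_le_right _ _))]
  · -- goodness implies image is valid
    intro y hy
    simp only [Finset.mem_coe, Finset.mem_filter, Finset.mem_univ, true_and] at hy ⊢
    obtain ⟨h1, h2⟩ := hy
    constructor
    · intro h0
      obtain ⟨i, _, hi⟩ := Finset.mem_image.1 h0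
      exact h1 i hi
    · intro a ha hna
      obtain ⟨i, _, hi⟩ := Finset.mem_image.1 ha
      obtain ⟨j, _, hj⟩ := Finset.mem_image.1 hna
      exact h2 j i (by rw [hj, hi])

lemma neg_ne_self_of_odd {F : Type*} [Field F] [Fintype F] {q : ℕ}
    (hodd : Odd q) (hF : Fintype.card F = q) : ∀ a : F, a ≠ 0 → -a ≠ a := by
  intro a ha hc
  have h2 : (2 : F) * a = 0 := by linear_combination -hc
  rcases mul_eq_zero.1 h2 with h20 | h20
  · have hdvd : ringChar F ∣ 2 := (ringChar.spec F 2).1 (by exact_mod_cast h20)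
    obtain ⟨n, hp, hcard⟩ := FiniteField.card F (ringChar F)
    have hp2 : ringChar F = 2 := by
      have h1 := Nat.le_of_dvd (by norm_num) hdvd
      have h2' := hp.two_le
      omega
    rw [hp2, hF] at hcard
    have heven : Even q := hcard ▸ (Nat.even_pow).2 ⟨even_two, n.2.ne'⟩
    exact (Nat.not_odd_iff_even.2 heven) hodd
  · exact ha h20

end AuxLemmas

theorem stmt11 (q : ℕ) (hodd : Odd q) (F : Type*) [Field F] [Fintype F]
    (hF : Fintype.card F = q)
    (k h : ℕ) (hh : 3 ≤ h) (hhk : h ≤ k) :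
    (Nat.card {x : Fin k → F // x ≠ 0 ∧
        ((∃ i : Fin k, (i : ℕ) < h ∧ x i = 0) ∨
          ∃ i j : Fin k, (i : ℕ) < (j : ℕ) ∧ (j : ℕ) < h ∧ x i + x j = 0)} : ℤ)
      = (q : ℤ) ^ (k - h) * ((q : ℤ) ^ h - (Gamma q h : ℤ)) - 1 := by
  classical
  have hne := neg_ne_self_of_odd hodd hF
  set P : (Fin k → F) → Prop := fun x =>
    (∃ i : Fin k, (i : ℕ) < h ∧ x i = 0) ∨
      ∃ i j : Fin k, (i : ℕ) < (j : ℕ) ∧ (j : ℕ) < h ∧ x i + x j = 0 with hP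
  set B' : Finset (Fin k → F) := Finset.univ.filter P with hB'
  set C : Finset (Fin k → F) := Finset.univ.filter (fun x => ¬ P x) with hC
  -- the subtype count is B'.card - 1
  have h0B : (0 : Fin k → F) ∈ B' := by
    rw [hB', Finset.mem_filter]
    refine ⟨Finset.mem_univ _, Or.inl ⟨⟨0, by omega⟩, ?_, rfl⟩⟩
    show (0 : ℕ) < h
    omega
  have e1 : Nat.card {x : Fin k → F // x ≠ 0 ∧ P x} = B'.card - 1 := by
    rw [Nat.card_eq_fintype_card, Fintype.card_subtype, ← Finset.card_erase_of_mem h0B]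
    congr 1
    ext x
    simp [hB', Finset.mem_erase, Finset.mem_filter, and_comm]
  -- complement count
  have e3 : B'.card + C.card = q ^ k := by
    rw [hB', hC, Finset.card_filter_add_card_filter_not, Finset.card_univ,
      Fintype.card_fun, hF, Fintype.card_fin]
  -- the equivalence splitting coordinates
  have notP_iff : ∀ x : Fin k → F, ¬ P x ↔
      ((∀ i : Fin k, (i : ℕ) < h → x i ≠ 0) ∧
        ∀ i j : Fin k, (i : ℕ) < (j : ℕ) → (j : ℕ) < h → x i + x j ≠ 0) := by
    intro x
    rw [hP]
    simp only [not_or, not_exists, not_and]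
  have e4 : C.card = Gamma q h * q ^ (k - h) := by
    have hC' : C.card = Nat.card {x : Fin k → F // ¬ P x} := by
      rw [Nat.card_eq_fintype_card, Fintype.card_subtype]
    rw [hC']
    have E : {x : Fin k → F // ¬ P x} ≃
        ({y : Fin h → F // (∀ i, y i ≠ 0) ∧ ∀ i j, y i ≠ -(y j)} × (Fin (k - h) → F)) := by
      refine ⟨fun x => ⟨⟨fun i => x.1 (Fin.castLE hhk i), ?_⟩,
          fun j => x.1 ⟨h + (j : ℕ), by omega⟩⟩,
        fun p => ⟨fun i => if hi : (i : ℕ) < h then p.1.1 ⟨i, hi⟩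
          else p.2 ⟨(i : ℕ) - h, by omega⟩, ?_⟩, ?_, ?_⟩
      · obtain ⟨np1, np2⟩ := (notP_iff x.1).1 x.2
        constructor
        · intro i
          exact np1 (Fin.castLE hhk i) i.2
        · intro i j hc
          have hc' : x.1 (Fin.castLE hhk i) = -(x.1 (Fin.castLE hhk j)) := hc
          rcases lt_trichotomy (i : ℕ) (j : ℕ) with hij | hij | hij
          · exact np2 (Fin.castLE hhk i) (Fin.castLE hhk j) hij j.2
              (by rw [hc']; ring)
          · have hij' : i = j := Fin.ext hij
            rw [hij'] at hc'
            exact hne _ (np1 (Fin.castLE hhk j) j.2) hc'.symm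
          · exact np2 (Fin.castLE hhk j) (Fin.castLE hhk i) hij i.2
              (by rw [hc']; ring)
      · rw [notP_iff]
        constructor
        · intro i hi
          rw [dif_pos hi]
          exact p.1.2.1 _
        · intro i j hij hj
          rw [dif_pos (by omega : (i : ℕ) < h), dif_pos hj]
          intro hc
          exact p.1.2.2 ⟨i, by omega⟩ ⟨j, hj⟩ (eq_neg_of_add_eq_zero_left hc)
      · intro x
        apply Subtype.ext
        funext i
        by_cases hi : (i : ℕ) < h
        · simp only [dif_pos hi]
          exact congrArg x.1 (Fin.ext rfl)
        · simp only [dif_neg hi]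
          exact congrArg x.1 (Fin.ext (show h + ((i : ℕ) - h) = (i : ℕ) by omega))
      · intro p
        apply Prod.ext
        · apply Subtype.ext
          funext i
          simp only []
          rw [dif_pos (show ((Fin.castLE hhk i : Fin k) : ℕ) < h from i.2)]
          exact congrArg p.1.1 (Fin.ext rfl)
        · funext j
          simp only []
          rw [dif_neg (by omega)]
          exact congrArg p.2 (Fin.ext (show h + (j : ℕ) - h = (j : ℕ) by omega))
    rw [Nat.card_congr E, Nat.card_eq_fintype_card, Fintype.card_prod, Fintype.card_fun,
      Fintype.card_fin, hF, Fintype.card_subtype, good_count q h hodd hF hne (by omega)]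
  -- final arithmetic
  have hB1 : 1 ≤ B'.card := Finset.card_pos.2 ⟨0, h0B⟩
  have hpow : (q : ℤ) ^ (k - h) * (q : ℤ) ^ h = (q : ℤ) ^ k := by
    rw [← pow_add]
    congr 1
    omega
  rw [e1]
  have : (↑(B'.card - 1) : ℤ) = (B'.card : ℤ) - 1 := by
    rw [Nat.cast_sub hB1]; norm_num
  rw [this]
  have e3' : (B'.card : ℤ) + (C.card : ℤ) = (q : ℤ) ^ k := by exact_mod_cast e3
  have e4' : (C.card : ℤ) = (Gamma q h : ℤ) * (q : ℤ) ^ (k - h) := by exact_mod_cast e4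
  rw [← hpow] at e3'
  linarith [e3', e4']
end

section
/- Let q be a prime power, k ≥ 1, and let D ⊆ 𝔽_q^k \ {0} be a finite set with n = #D such that aD = D for every a ∈ 𝔽_q^*. Let f be a linear form on 𝔽_q^k, let b ∈ 𝔽_q^*, and set w₀ := #{ x ∈ D : f(x) ≠ 0 }. Then #{ x ∈ D : f(x) + b ≠ 0 } = n − w₀/(q−1), and hence the weight of the codeword of C_{[D,D]~} corresponding to (f,b) satisfies (q−1)·(#{ x ∈ D : f(x) ≠ 0 } + #{ x ∈ D : f(x) + b ≠ 0 }) = (q−1)·n + (q−2)·w₀. -/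
theorem stmt15 (q : ℕ) (F : Type*) [Field F] [Fintype F] (hF : Fintype.card F = q)
    (k : ℕ) (hk : 1 ≤ k)
    (D : Set (Fin k → F)) (hD0 : ∀ x ∈ D, x ≠ 0)
    (hDsc : ∀ a : F, a ≠ 0 → (fun x => a • x) '' D = D)
    (n : ℕ) (hn : n = Nat.card D)
    (f : (Fin k → F) →ₗ[F] F) (b : F) (hb : b ≠ 0)
    (w0 : ℕ) (hw0 : w0 = Nat.card {x : Fin k → F // x ∈ D ∧ f x ≠ 0}) :
    -- #{x ∈ D : f(x) + b ≠ 0} = n − w₀/(q−1)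
    ((q : ℤ) - 1) * (Nat.card {x : Fin k → F // x ∈ D ∧ f x + b ≠ 0} : ℤ)
        = ((q : ℤ) - 1) * n - w0
    ∧
    -- (q−1)·(#{f ≠ 0} + #{f + b ≠ 0}) = (q−1)·n + (q−2)·w₀
    ((q : ℤ) - 1) * ((w0 : ℤ) + (Nat.card {x : Fin k → F // x ∈ D ∧ f x + b ≠ 0} : ℤ))
        = ((q : ℤ) - 1) * n + ((q : ℤ) - 2) * w0 := by
  classical
  have hmem : ∀ a : F, a ≠ 0 → ∀ x ∈ D, a • x ∈ D := by
    intro a ha x hx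
    rw [← hDsc a ha]
    exact ⟨x, hx, rfl⟩
  have hbne : (-b) ≠ 0 := neg_ne_zero.mpr hb
  set m := Nat.card {x : Fin k → F // x ∈ D ∧ f x = -b} with hm
  -- the bijection
  have e : {x : Fin k → F // x ∈ D ∧ f x ≠ 0} ≃
      Fˣ × {x : Fin k → F // x ∈ D ∧ f x = -b} :=
  { toFun := fun x =>
      (Units.mk0 (f x.1 * (-b)⁻¹) (mul_ne_zero x.2.2 (inv_ne_zero hbne)),
       ⟨((f x.1)⁻¹ * (-b)) • x.1,
        hmem _ (mul_ne_zero (inv_ne_zero x.2.2) hbne) _ x.2.1, by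
          rw [map_smul, smul_eq_mul, mul_comm, ← mul_assoc,
            mul_inv_cancel₀ x.2.2, one_mul]⟩)
    invFun := fun p =>
      ⟨(p.1 : F) • p.2.1, hmem _ p.1.ne_zero _ p.2.2.1, by
        rw [map_smul, smul_eq_mul, p.2.2.2]
        exact mul_ne_zero p.1.ne_zero hbne⟩
    left_inv := by
      rintro ⟨x, hxD, hxf⟩
      apply Subtype.ext
      simp only [Units.val_mk0, smul_smul]
      rw [show f x * (-b)⁻¹ * ((f x)⁻¹ * (-b)) = 1 by field_simp, one_smul]
    right_inv := by
      rintro ⟨u, ⟨y, hyD, hyf⟩⟩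
      have hfy : f ((u : F) • y) = (u : F) * (-b) := by
        rw [map_smul, smul_eq_mul, hyf]
      refine Prod.ext (Units.ext ?_) (Subtype.ext ?_)
      · simp only [Units.val_mk0, hfy]
        field_simp
      · simp only [hfy, smul_smul]
        rw [show ((u : F) * (-b))⁻¹ * (-b) * (u : F) = 1 by
          field_simp, one_smul] }
  have hcardu : Fintype.card Fˣ = q - 1 := by
    rw [Fintype.card_units, hF]
  have hq2 : 2 ≤ q := by
    rw [← hF]; exact Fintype.one_lt_card
  have hw0m : w0 = (q - 1) * m := by
    rw [hw0, Nat.card_congr e, Nat.card_prod, Nat.card_eq_fintype_card, hcardu]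
  -- partition of D
  set N := Nat.card {x : Fin k → F // x ∈ D ∧ f x + b ≠ 0} with hN
  have hsplit : N + m = n := by
    have h1 : N = (Finset.univ.filter (fun x : Fin k → F => x ∈ D ∧ f x + b ≠ 0)).card := by
      rw [hN, Nat.card_eq_fintype_card, Fintype.card_subtype]
    have h2 : m = (Finset.univ.filter (fun x : Fin k → F => x ∈ D ∧ f x + b = 0)).card := by
      rw [hm, Nat.card_eq_fintype_card, Fintype.card_subtype]
      congr 1
      apply Finset.filter_congr
      intro x _
      simp [add_eq_zero_iff_eq_neg]
    have h3 : n = (Finset.univ.filter (fun x : Fin k → F => x ∈ D)).card := by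
      rw [hn, Nat.card_eq_fintype_card, Fintype.card_subtype]
    have key := Finset.card_filter_add_card_filter_not
      (p := fun x : Fin k → F => f x + b = 0)
      (s := Finset.univ.filter (fun x : Fin k → F => x ∈ D))
    simp only [Finset.filter_filter] at key
    simp only [ne_eq] at h1
    rw [h1, h2, h3]
    omega
  -- conclude by integer arithmetic
  have hsplitZ : (N : ℤ) + m = n := by exact_mod_cast hsplit
  have hw0Z : (w0 : ℤ) = ((q : ℤ) - 1) * m := by
    have : (w0 : ℤ) = ((q - 1 : ℕ) : ℤ) * m := by exact_mod_cast hw0m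
    rw [this, Nat.cast_sub (by omega)]
    norm_num
  constructor
  · rw [hw0Z]; linear_combination ((q : ℤ) - 1) * hsplitZ
  · rw [hw0Z]; linear_combination ((q : ℤ) - 1) * hsplitZ
end

section
/- Let q be a prime power, k ≥ 1, and let D ⊆ 𝔽_q^k \ {0} be a finite set with n = #D such that aD = D for every a ∈ 𝔽_q^*. For a linear form f on 𝔽_q^k write w₀(f) := #{ x ∈ D : f(x) ≠ 0 }. Then the set of weights of the code C_{[D,D]~}, i.e. the set of values of #{x ∈ D : f(x) ≠ 0} + #{x ∈ D : f(x) + b ≠ 0} as (f,b) ranges over all pairs of a linear form f on 𝔽_q^k and b ∈ 𝔽_q, equals { 2·w₀(f) : f a linear form on 𝔽_q^k } ∪ { n + (q−2)·w₀(f)/(q−1) : f a linear form on 𝔽_q^k }. -/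
theorem stmt16 (q : ℕ) (F : Type*) [Field F] [Fintype F] (hF : Fintype.card F = q)
    (k : ℕ) (hk : 1 ≤ k)
    (D : Set (Fin k → F)) (hD0 : ∀ x ∈ D, x ≠ 0)
    (hDsc : ∀ a : F, a ≠ 0 → (fun x => a • x) '' D = D)
    (n : ℕ) (hn : n = Nat.card D) :
    {w : ℕ | ∃ (f : (Fin k → F) →ₗ[F] F) (b : F),
        w = Nat.card {x : Fin k → F // x ∈ D ∧ f x ≠ 0}
          + Nat.card {x : Fin k → F // x ∈ D ∧ f x + b ≠ 0}}
      = {w : ℕ | ∃ f : (Fin k → F) →ₗ[F] F,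
            w = 2 * Nat.card {x : Fin k → F // x ∈ D ∧ f x ≠ 0}}
        ∪ {w : ℕ | ∃ f : (Fin k → F) →ₗ[F] F,
            w = n + (q - 2) * Nat.card {x : Fin k → F // x ∈ D ∧ f x ≠ 0} / (q - 1)} := by
  classical
  have hq2 : 2 ≤ q := by
    rw [← hF]; exact Fintype.one_lt_card
  have hmem : ∀ a : F, a ≠ 0 → ∀ x : Fin k → F, x ∈ D ↔ a • x ∈ D := by
    intro a ha x
    constructor
    · intro hx
      rw [← hDsc a ha]
      exact ⟨x, hx, rfl⟩
    · intro hx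
      rw [← hDsc a⁻¹ (inv_ne_zero ha)]
      refine ⟨a • x, hx, ?_⟩
      simp [smul_smul, inv_mul_cancel₀ ha]
  have hcard : ∀ P : (Fin k → F) → Prop, Nat.card {x // x ∈ D ∧ P x}
      = (Finset.univ.filter (fun x => x ∈ D ∧ P x)).card := by
    intro P
    rw [Nat.card_eq_fintype_card, Fintype.card_subtype]
  have hn' : n = (Finset.univ.filter (fun x => x ∈ D)).card := by
    rw [hn, Nat.card_eq_fintype_card, Fintype.card_subtype]
  have key : ∀ (f : (Fin k → F) →ₗ[F] F) (b : F), b ≠ 0 →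
      Nat.card {x : Fin k → F // x ∈ D ∧ f x ≠ 0}
        + Nat.card {x : Fin k → F // x ∈ D ∧ f x + b ≠ 0}
      = n + (q - 2) * Nat.card {x : Fin k → F // x ∈ D ∧ f x ≠ 0} / (q - 1) := by
    intro f b hb
    set m := Nat.card {x : Fin k → F // x ∈ D ∧ f x = 1} with hm
    have hcc : ∀ c : F, c ≠ 0 → Nat.card {x : Fin k → F // x ∈ D ∧ f x = c} = m := by
      intro c hc
      apply Nat.card_congr
      refine ⟨fun y => ⟨c⁻¹ • y.1, ?_, ?_⟩, fun y => ⟨c • y.1, ?_, ?_⟩, ?_, ?_⟩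
      · exact (hmem _ (inv_ne_zero hc) _).1 y.2.1
      · simp [map_smul, y.2.2, smul_eq_mul, inv_mul_cancel₀ hc]
      · exact (hmem _ hc _).1 y.2.1
      · simp [map_smul, y.2.2, smul_eq_mul]
      · intro y; ext : 1; simp [smul_smul, mul_inv_cancel₀ hc]
      · intro y; ext : 1; simp [smul_smul, inv_mul_cancel₀ hc]
    -- w₀ = (q-1) * m
    have hw0 : Nat.card {x : Fin k → F // x ∈ D ∧ f x ≠ 0} = (q - 1) * m := by
      rw [hcard]
      rw [Finset.card_eq_sum_card_fiberwise
        (f := fun x => f x) (t := Finset.univ.erase 0)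
        (by intro x hx
            simp only [Finset.mem_coe, Finset.mem_filter] at hx
            exact Finset.mem_erase.2 ⟨hx.2.2, Finset.mem_univ _⟩)]
      trans ∑ _c ∈ Finset.univ.erase (0 : F), m
      · apply Finset.sum_congr rfl
        intro c hc
        have hc0 : c ≠ 0 := (Finset.mem_erase.1 hc).1
        rw [← hcc c hc0, hcard]
        apply Finset.card_bij (fun x _ => x)
        · intro x hx
          simp only [Finset.mem_filter, Finset.mem_univ, true_and] at hx ⊢
          exact ⟨hx.1.1, hx.2⟩
        · intro a _ b _ h
          exact h
        · intro y hy
          simp only [Finset.mem_filter, Finset.mem_univ, true_and] at hy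
          refine ⟨y, ?_, rfl⟩
          simp only [Finset.mem_filter, Finset.mem_univ, true_and]
          exact ⟨⟨hy.1, hy.2 ▸ hc0⟩, hy.2⟩
      · rw [Finset.sum_const, smul_eq_mul,
          Finset.card_erase_of_mem (Finset.mem_univ _), Finset.card_univ, hF]
    -- second count: n - m, with split
    have hsplit : Nat.card {x : Fin k → F // x ∈ D ∧ f x + b ≠ 0} + m = n := by
      rw [hcard, hn']
      have := Finset.card_filter_add_card_filter_not
        (s := Finset.univ.filter (fun x : Fin k → F => x ∈ D))
        (p := fun x => f x + b ≠ 0)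
      rw [Finset.filter_filter, Finset.filter_filter] at this
      rw [← this]
      congr 1
      · apply Finset.card_nbij id (fun x hx => ?_) (fun x hx _ hy h => h) (fun x hx => ⟨x, ?_, rfl⟩)
        · simp only [Finset.mem_filter, Finset.mem_coe] at hx ⊢; tauto
        · simp only [Finset.mem_filter, Finset.mem_coe] at hx ⊢; tauto
      · have heq : (Finset.univ.filter (fun x => x ∈ D ∧ ¬ (f x + b ≠ 0)))
            = Finset.univ.filter (fun x => x ∈ D ∧ f x = -b) := by
          ext x
          simp only [Finset.mem_filter, Finset.mem_univ, true_and, not_not]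
          constructor
          · rintro ⟨h1, h2⟩; exact ⟨h1, eq_neg_of_add_eq_zero_left h2⟩
          · rintro ⟨h1, h2⟩; exact ⟨h1, by rw [h2]; simp⟩
        rw [heq, ← hcard, hcc (-b) (neg_ne_zero.2 hb)]
    have hmn : m ≤ n := by omega
    have hq1 : 0 < q - 1 := by omega
    have hdiv : (q - 2) * ((q - 1) * m) / (q - 1) = (q - 2) * m := by
      rw [show (q - 2) * ((q - 1) * m) = (q - 1) * ((q - 2) * m) by ring,
        Nat.mul_div_cancel_left _ hq1]
    rw [hw0, hdiv]
    have hqm : (q - 1) * m = (q - 2) * m + m := by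
      have h : q - 1 = (q - 2) + 1 := by omega
      rw [h, add_mul, one_mul]
    omega
  ext w
  simp only [Set.mem_setOf_eq, Set.mem_union]
  constructor
  · rintro ⟨f, b, rfl⟩
    by_cases hb : b = 0
    · left
      refine ⟨f, ?_⟩
      subst hb
      simp only [add_zero, two_mul]
    · right
      exact ⟨f, key f b hb⟩
  · rintro (⟨f, rfl⟩ | ⟨f, rfl⟩)
    · refine ⟨f, 0, ?_⟩
      simp only [add_zero, two_mul]
    · exact ⟨f, 1, (key f 1 one_ne_zero).symm⟩
end
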